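/- Let α be a type, f : α → ℝ a function with f x ∈ {0,1} for all x, and γ a real number. Let (S_k)_{k≥0} be a sequence of subsets of α with S_k ⊆ {x | f x = 1} for every k, and define M_k : α → ℝ by M_0 = 0 and M_{k+1} x = γ·M_k x + (if x ∈ S_k then 1 else 0). Then for every k and every x, f x + M_k x = f x · (1 + M_k x); that is, the additive effective cost equals the multiplicative effective cost in every round. -/
import Mathlib

open scoped Classical

/-- **Theorem 3.** For a `{0,1}`-valued constraint, if only entries with cost `1` can
ever be penalized, then under the cell-scope evaporate-then-increment dynamics the
additive effective cost equals the multiplicative effective cost in every round, i.e.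
the DGLS variants `(A, γ, cel)` and `(M, γ, cel)` are equivalent for any `γ`. -/
theorem dgls_additive_eq_multiplicative {α : Type*} (f : α → ℝ)
    (hf : ∀ x, f x = 0 ∨ f x = 1) (γ : ℝ)
    (S : ℕ → Set α) (hS : ∀ k, S k ⊆ {x | f x = 1})
    (M : ℕ → α → ℝ) (hM0 : ∀ x, M 0 x = 0)
    (hrec : ∀ k x, M (k + 1) x = γ * M k x + (if x ∈ S k then 1 else 0)) :
    ∀ k x, f x + M k x = f x * (1 + M k x) := by
  intro k x
  rcases hf x with h0 | h1
  · have hz : ∀ k, M k x = 0 := by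
      intro k
      induction k with
      | zero => exact hM0 x
      | succ n ih =>
        rw [hrec, ih, if_neg]
        · ring
        · intro hx
          have := hS n hx
          simp [Set.mem_setOf_eq, h0] at this
    rw [h0, hz]; ring
  · rw [h1]; ring
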